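/- arXiv:0801.1246 — 9 statements merged into one kernel-verified Lean document; each statement's English description precedes it below -/
import Mathlib

section
/- Let α, β, γ, δ ∈ ℝ with α + δ ≠ 0 and αγ + βδ = 0, and suppose (γ,δ) ≠ (−β,α). If a skew-adjoint map A (given on the basis by A e₁ = b e₂ + c e₃, A e₂ = −b e₁ + a e₃, A e₃ = c e₁ + a e₂) is a derivation of the Lie algebra 𝔤₅, i.e. A[X,Y] = [AX,Y] + [X,AY] for all X,Y, then a = b = c = 0, i.e. A = 0. -/
/-- The bracket of the Lie algebra 𝔤₅ on ℝ³ = ℝ × ℝ × ℝ. -/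
def br5 (α β γ δ : ℝ) (x y : ℝ × ℝ × ℝ) : ℝ × ℝ × ℝ :=
  (α * (x.1 * y.2.2 - x.2.2 * y.1) + γ * (x.2.1 * y.2.2 - x.2.2 * y.2.1),
   β * (x.1 * y.2.2 - x.2.2 * y.1) + δ * (x.2.1 * y.2.2 - x.2.2 * y.2.1),
   0)

/-- The Lorentzian skew-adjoint map with A e₁ = b e₂ + c e₃,
A e₂ = −b e₁ + a e₃, A e₃ = c e₁ + a e₂. -/
def skewMap (a b c : ℝ) (x : ℝ × ℝ × ℝ) : ℝ × ℝ × ℝ :=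
  (-b * x.2.1 + c * x.2.2, b * x.1 + a * x.2.2, c * x.1 + a * x.2.1)

theorem g5_skew_derivation_zero (α β γ δ a b c : ℝ)
    (h1 : α + δ ≠ 0) (h2 : α * γ + β * δ = 0) (h3 : (γ, δ) ≠ (-β, α))
    (hder : ∀ X Y : ℝ × ℝ × ℝ,
      skewMap a b c (br5 α β γ δ X Y)
        = br5 α β γ δ (skewMap a b c X) Y + br5 α β γ δ X (skewMap a b c Y)) :
    a = 0 ∧ b = 0 ∧ c = 0 := by
  have h13 := hder (1,0,0) (0,0,1)
  have h23 := hder (0,1,0) (0,0,1)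
  have h12 := hder (1,0,0) (0,1,0)
  simp only [br5, skewMap, Prod.mk.injEq, Prod.mk_add_mk] at h13 h23 h12
  obtain ⟨e1, e2, e3⟩ := h13
  obtain ⟨f1, f2, f3⟩ := h23
  obtain ⟨g1, g2, g3⟩ := h12
  -- equations: from these derive βa+αc=0, δa+γc=0, αa-γc=0, βa-δc=0, (β+γ)b=0, (α-δ)b=0
  have hb : b = 0 := by
    by_contra hb
    apply h3
    have hbg : β + γ = 0 := by
      have := mul_left_cancel₀ hb (show b * (β+γ) = b * 0 by nlinarith [e1, f1, e2, f2, g1, g2, e3, f3, g3])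
      linarith
    have had : α - δ = 0 := by
      have := mul_left_cancel₀ hb (show b * (α-δ) = b * 0 by nlinarith [e1, f1, e2, f2, g1, g2, e3, f3, g3])
      linarith
    simp [Prod.ext_iff]
    constructor <;> linarith
  subst hb
  have hc : c = 0 := by
    have h := mul_left_cancel₀ h1 (show (α+δ) * c = (α+δ) * 0 by nlinarith [e1, f1, e2, f2, g1, g2, e3, f3, g3])
    linarith
  subst hc
  have ha : a = 0 := by
    have h := mul_left_cancel₀ h1 (show (α+δ) * a = (α+δ) * 0 by nlinarith [e1, f1, e2, f2, g1, g2, e3, f3, g3])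
    linarith
  exact ⟨ha, rfl, rfl⟩
end

section
/- Let α, β ∈ ℝ with α ≠ 0, and set γ = −β, δ = α (so α+δ = 2α ≠ 0 and αγ+βδ = 0 automatically). Then the skew-adjoint map A defined by A e₁ = e₂, A e₂ = −e₁, A e₃ = 0 is a derivation of the Lie algebra 𝔤₅ with these parameters, and every skew-adjoint derivation of this Lie algebra is a real multiple of A. -/
/-- Lorentzian inner product of signature (+,+,-) on ℝ³ = ℝ × ℝ × ℝ. -/
def lor (x y : ℝ × ℝ × ℝ) : ℝ := x.1 * y.1 + x.2.1 * y.2.1 - x.2.2 * y.2.2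

/-- The bracket of 𝔤₅ with γ = −β, δ = α:
[e₁,e₂]=0, [e₁,e₃]=α e₁+β e₂, [e₂,e₃]=−β e₁+α e₂. -/
def br5' (α β : ℝ) (x y : ℝ × ℝ × ℝ) : ℝ × ℝ × ℝ :=
  (α * (x.1 * y.2.2 - x.2.2 * y.1) + (-β) * (x.2.1 * y.2.2 - x.2.2 * y.2.1),
   β * (x.1 * y.2.2 - x.2.2 * y.1) + α * (x.2.1 * y.2.2 - x.2.2 * y.2.1),
   0)

/-- The map A with A e₁ = e₂, A e₂ = −e₁, A e₃ = 0. -/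
def A0 (x : ℝ × ℝ × ℝ) : ℝ × ℝ × ℝ := (-x.2.1, x.1, 0)

theorem g5_symmetric_case_derivations (α β : ℝ) (hα : α ≠ 0) :
    (∀ X Y : ℝ × ℝ × ℝ,
      A0 (br5' α β X Y) = br5' α β (A0 X) Y + br5' α β X (A0 Y)) ∧
    (∀ A : (ℝ × ℝ × ℝ) →ₗ[ℝ] (ℝ × ℝ × ℝ),
      (∀ x y : ℝ × ℝ × ℝ, lor (A x) y + lor x (A y) = 0) →
      (∀ X Y : ℝ × ℝ × ℝ,
        A (br5' α β X Y) = br5' α β (A X) Y + br5' α β X (A Y)) →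
      ∃ t : ℝ, ∀ x : ℝ × ℝ × ℝ, A x = t • A0 x) := by
  constructor
  · intro X Y
    simp only [A0, br5', Prod.mk.injEq, Prod.mk_add_mk]
    refine ⟨by ring, by ring, by ring⟩
  · intro A hskew hder
    set p := A (1, 0, 0) with hp
    set q := A (0, 1, 0) with hq
    set r := A (0, 0, 1) with hr
    -- skew conditions
    have s11 : p.1 = 0 := by
      have h := hskew (1, 0, 0) (1, 0, 0); rw [← hp] at h; simp [lor] at h; linarith
    have s22 : q.2.1 = 0 := by
      have h := hskew (0, 1, 0) (0, 1, 0); rw [← hq] at h; simp [lor] at h; linarith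
    have s33 : r.2.2 = 0 := by
      have h := hskew (0, 0, 1) (0, 0, 1); rw [← hr] at h; simp [lor] at h; linarith
    have s12 : p.2.1 + q.1 = 0 := by
      have h := hskew (1, 0, 0) (0, 1, 0); rw [← hp, ← hq] at h; simp [lor] at h; linarith
    have s13 : r.1 = p.2.2 := by
      have h := hskew (1, 0, 0) (0, 0, 1); rw [← hp, ← hr] at h; simp [lor] at h; linarith
    have s23 : r.2.1 = q.2.2 := by
      have h := hskew (0, 1, 0) (0, 0, 1); rw [← hq, ← hr] at h; simp [lor] at h; linarith
    -- derivation on (e1, e2)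
    have hd := hder (1, 0, 0) (0, 1, 0)
    rw [← hp, ← hq] at hd
    have hbr0 : br5' α β (1, 0, 0) (0, 1, 0) = (0 : ℝ × ℝ × ℝ) := by
      simp [br5', Prod.ext_iff]
    rw [hbr0, map_zero] at hd
    have hd1 : (0 : ℝ × ℝ × ℝ).1 = (br5' α β p (0, 1, 0) + br5' α β (1, 0, 0) q).1 := by
      rw [hd]
    have hd2 : (0 : ℝ × ℝ × ℝ).2.1 = (br5' α β p (0, 1, 0) + br5' α β (1, 0, 0) q).2.1 := by
      rw [hd]
    simp [br5'] at hd1 hd2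
    have key : (α ^ 2 + β ^ 2) * q.2.2 = 0 := by linear_combination (-α) * hd1 - β * hd2
    have hpos : (0 : ℝ) < α ^ 2 + β ^ 2 := by positivity
    have hq3 : q.2.2 = 0 := (mul_eq_zero.1 key).resolve_left (ne_of_gt hpos)
    rw [hq3] at hd2
    have hp3 : p.2.2 = 0 := by
      have h : α * p.2.2 = 0 := by linarith
      exact (mul_eq_zero.1 h).resolve_left hα
    have hr1 : r.1 = 0 := by rw [s13, hp3]
    have hr2 : r.2.1 = 0 := by rw [s23, hq3]
    have hq1 : q.1 = -p.2.1 := by linarith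
    refine ⟨p.2.1, fun x => ?_⟩
    have hx : x = x.1 • ((1 : ℝ), (0 : ℝ), (0 : ℝ)) + x.2.1 • ((0 : ℝ), (1 : ℝ), (0 : ℝ))
        + x.2.2 • ((0 : ℝ), (0 : ℝ), (1 : ℝ)) := by
      simp [Prod.ext_iff]
    rw [hx, map_add, map_add, map_smul, map_smul, map_smul, ← hp, ← hq, ← hr]
    simp [A0, Prod.ext_iff, s11, s22, s33, hp3, hq3, hr1, hr2, hq1]
    constructor <;> ring
end

section
/- Let α, β, γ, δ ∈ ℝ with α + δ ≠ 0 and αγ − βδ = 0, and suppose (γ,δ) ≠ (β,α). Then the only skew-adjoint derivation of the Lie algebra 𝔤₆ (bracket [e₁,e₂]=α e₂+β e₃, [e₁,e₃]=γ e₂+δ e₃, [e₂,e₃]=0) is the zero map; equivalently the only solution (a,b,c) of the system (α−δ)a=0, (β−γ)a=0, αb−βc=0, γb−δc=0, γb+αc=0, δb+βc=0 is a=b=c=0. -/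
theorem g6_skew_derivation_zero (α β γ δ a b c : ℝ)
    (h1 : α + δ ≠ 0) (h2 : α * γ - β * δ = 0) (h3 : (γ, δ) ≠ (β, α))
    (e1 : (α - δ) * a = 0) (e2 : (β - γ) * a = 0)
    (e3 : α * b - β * c = 0) (e4 : γ * b - δ * c = 0)
    (e5 : γ * b + α * c = 0) (e6 : δ * b + β * c = 0) :
    a = 0 ∧ b = 0 ∧ c = 0 := by
  have hc : c = 0 := by
    have h : (α + δ) * c = 0 := by linarith
    exact (mul_eq_zero.mp h).resolve_left h1
  subst hc
  have hb : b = 0 := by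
    have hα : α * b = 0 := by linarith
    have hδ : δ * b = 0 := by linarith
    have : (α + δ) * b = 0 := by ring_nf; linarith
    exact (mul_eq_zero.mp this).resolve_left h1
  subst hb
  refine ⟨?_, rfl, rfl⟩
  by_cases hδα : δ = α
  · have hγβ : γ ≠ β := fun h => h3 (by rw [h, hδα])
    have : β - γ ≠ 0 := fun h => hγβ (by linarith)
    exact (mul_eq_zero.mp e2).resolve_left this
  · have : α - δ ≠ 0 := fun h => hδα (by linarith)
    exact (mul_eq_zero.mp e1).resolve_left this
end

section
/- Let α, β, γ, δ ∈ ℝ with α + δ ≠ 0, αγ = 0 and α ≠ δ. Then the only solution (a,b,c) of the system: β(b−c)=αa−γc, βa+αb=δc−βa, βa+αc=δc−βa, β(b−c)=αa−γb, βa+αb=δb−βa, βa+αc=δb−βa, α(c−b)=δ(c−b), β(c−b)=δa+γb, β(c−b)=δa+γc, is a=b=c=0. -/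
theorem g7_skew_derivation_zero (α β γ δ a b c : ℝ)
    (h1 : α + δ ≠ 0) (h2 : α * γ = 0) (h3 : α ≠ δ)
    (e1 : β * (b - c) = α * a - γ * c)
    (e2 : β * a + α * b = δ * c - β * a)
    (e3 : β * a + α * c = δ * c - β * a)
    (e4 : β * (b - c) = α * a - γ * b)
    (e5 : β * a + α * b = δ * b - β * a)
    (e6 : β * a + α * c = δ * b - β * a)
    (e7 : α * (c - b) = δ * (c - b))
    (e8 : β * (c - b) = δ * a + γ * b)
    (e9 : β * (c - b) = δ * a + γ * c) :
    a = 0 ∧ b = 0 ∧ c = 0 := by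
  have hcb : c = b := by
    have h : (α - δ) * (c - b) = 0 := by linear_combination e7
    rcases mul_eq_zero.mp h with h | h
    · exact absurd (sub_eq_zero.mp h) h3
    · linarith [sub_eq_zero.mp h]
  subst hcb
  have ha : a = 0 := by
    have h : (α + δ) * a = 0 := by linear_combination -e1 - e8
    exact (mul_eq_zero.mp h).resolve_left h1
  subst ha
  have hb : c = 0 := by
    have h : (α - δ) * c = 0 := by linear_combination e2
    rcases mul_eq_zero.mp h with h | h
    · exact absurd (sub_eq_zero.mp h) h3
    · exact h
  exact ⟨rfl, hb, hb⟩
end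

section
/- In the Lie algebra 𝔤₅, a nonzero vector X = x₁e₁ + x₂e₂ (with x₃ = 0) is a geodesic vector with constant k = 0 if and only if αx₁² + (β+γ)x₁x₂ + δx₂² = 0. -/
theorem g5_horizontal_geodesic (α β γ δ : ℝ) (h1 : α + δ ≠ 0)
    (h2 : α * γ + β * δ = 0) (x₁ x₂ : ℝ) (hX : (x₁, x₂) ≠ (0, 0)) :
    (∀ Y : ℝ × ℝ × ℝ,
        lor (br5 α β γ δ (x₁, x₂, 0) Y) (x₁, x₂, 0) = 0 * lor (x₁, x₂, 0) Y)
      ↔ α * x₁ ^ 2 + (β + γ) * x₁ * x₂ + δ * x₂ ^ 2 = 0 := by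
  constructor
  · intro h
    have := h (0, 0, 1)
    simp [lor, br5] at this
    nlinarith [this]
  · intro h Y
    simp only [lor, br5]
    linear_combination Y.2.2 * h
end

section
/- In the Lie algebra 𝔤₅ with α + δ ≠ 0, αγ + βδ = 0, a null vector X = x₁e₁ + x₂e₂ + x₃e₃ (so x₁² + x₂² = x₃², X ≠ 0) is a geodesic vector for some k ∈ ℝ if and only if γx₁² + (δ−α)x₁x₂ − βx₂² = 0. -/
theorem g5_null_geodesic (α β γ δ : ℝ) (h1 : α + δ ≠ 0)
    (h2 : α * γ + β * δ = 0) (x₁ x₂ x₃ : ℝ)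
    (hnull : x₁ ^ 2 + x₂ ^ 2 = x₃ ^ 2) (hne : (x₁, x₂, x₃) ≠ (0, 0, 0)) :
    (∃ k : ℝ, ∀ Y : ℝ × ℝ × ℝ,
        lor (br5 α β γ δ (x₁, x₂, x₃) Y) (x₁, x₂, x₃) = k * lor (x₁, x₂, x₃) Y)
      ↔ γ * x₁ ^ 2 + (δ - α) * x₁ * x₂ - β * x₂ ^ 2 = 0 := by
  have hx3 : x₃ ≠ 0 := by
    intro h
    apply hne
    have hx1 : x₁ = 0 := by nlinarith [sq_nonneg x₁, sq_nonneg x₂]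
    have hx2 : x₂ = 0 := by nlinarith [sq_nonneg x₁, sq_nonneg x₂]
    simp [hx1, hx2, h]
  constructor
  · rintro ⟨k, hk⟩
    have h := hk (x₂, -x₁, 0)
    simp only [lor, br5] at h
    have h3 : x₃ * (γ * x₁ ^ 2 + (δ - α) * x₁ * x₂ - β * x₂ ^ 2) = 0 := by
      linear_combination h
    exact (mul_eq_zero.mp h3).resolve_left hx3
  · intro hQ
    refine ⟨-((α * x₁ + β * x₂) * x₁ + (γ * x₁ + δ * x₂) * x₂) / x₃, fun Y => ?_⟩
    simp only [lor, br5]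
    field_simp
    linear_combination ((α * x₁ + β * x₂) * Y.1 + (γ * x₁ + δ * x₂) * Y.2.1) * hnull +
      (x₂ * Y.1 - x₁ * Y.2.1) * hQ
end

section
/- Let α, β, γ, δ ∈ ℝ with α + δ ≠ 0, αγ + βδ = 0, (α,β) ≠ (0,0), (γ,δ) ≠ (0,0), and (α−δ)² + 4βγ < 0. Then there is no nonzero null vector X ∈ 𝔤₅ that is a geodesic vector: i.e., there is no (x₁,x₂,x₃) ≠ 0 with x₁² + x₂² = x₃² and γx₁² + (δ−α)x₁x₂ − βx₂² = 0. -/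
theorem g5_no_null_geodesic (α β γ δ : ℝ) (h1 : α + δ ≠ 0)
    (h2 : α * γ + β * δ = 0) (h3 : (α, β) ≠ (0, 0)) (h4 : (γ, δ) ≠ (0, 0))
    (h5 : (α - δ) ^ 2 + 4 * β * γ < 0) :
    ¬ ∃ x₁ x₂ x₃ : ℝ, (x₁, x₂, x₃) ≠ (0, 0, 0) ∧
      x₁ ^ 2 + x₂ ^ 2 = x₃ ^ 2 ∧
      γ * x₁ ^ 2 + (δ - α) * x₁ * x₂ - β * x₂ ^ 2 = 0 := by
  rintro ⟨x₁, x₂, x₃, hne, hnull, hq⟩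
  have hγ : γ ≠ 0 := by
    intro h; rw [h] at h5; nlinarith [sq_nonneg (α - δ)]
  -- 4γ·Q = (2γx₁+(δ-α)x₂)² - ((α-δ)²+4βγ)x₂² = 0
  have key : (2*γ*x₁ + (δ-α)*x₂)^2 = ((α-δ)^2 + 4*β*γ) * x₂^2 := by
    linear_combination 4*γ*hq
  have hx2sq : x₂^2 = 0 := by
    have h6 : x₂^2 ≤ 0 := by nlinarith [sq_nonneg (2*γ*x₁ + (δ-α)*x₂), key]
    exact le_antisymm h6 (sq_nonneg x₂)
  have hx2 : x₂ = 0 := pow_eq_zero_iff (n := 2) (by norm_num) |>.mp hx2sq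
  have hx1 : x₁ = 0 := by
    rw [hx2] at hq
    have : γ * x₁ ^ 2 = 0 := by linarith [hq]
    have := mul_eq_zero.mp this
    rcases this with h | h
    · exact absurd h hγ
    · exact pow_eq_zero_iff (n := 2) (by norm_num) |>.mp h
  have hx3 : x₃ = 0 := by
    rw [hx1, hx2] at hnull
    nlinarith [sq_nonneg x₃]
  exact hne (by rw [hx1, hx2, hx3])
end

section
/- Let α, β, γ, δ ∈ ℝ with α + δ ≠ 0, αγ + βδ = 0, (α,β) ≠ (0,0) ≠ (γ,δ), (α−δ)² + 4βγ < 0 and (β+γ)² − 4αδ < 0. Then every geodesic vector of 𝔤₅ is a real multiple of e₃; in particular every homogeneous geodesic direction is timelike. -/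
theorem g5_only_timelike_geodesics (α β γ δ : ℝ) (h1 : α + δ ≠ 0)
    (h2 : α * γ + β * δ = 0) (h3 : (α, β) ≠ (0, 0)) (h4 : (γ, δ) ≠ (0, 0))
    (h5 : (α - δ) ^ 2 + 4 * β * γ < 0) (h6 : (β + γ) ^ 2 - 4 * α * δ < 0)
    (X : ℝ × ℝ × ℝ) (k : ℝ)
    (hgeo : ∀ Y : ℝ × ℝ × ℝ, lor (br5 α β γ δ X Y) X = k * lor X Y) :
    (∃ t : ℝ, X = ((0 : ℝ), (0 : ℝ), t)) ∧ (X ≠ 0 → lor X X < 0) := by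
  obtain ⟨x, y, z⟩ := X
  have e1 := hgeo (1, 0, 0)
  have e2 := hgeo (0, 1, 0)
  have e3 := hgeo (0, 0, 1)
  simp only [lor, br5] at e1 e2 e3
  ring_nf at e1 e2 e3
  have hbg : β * γ < 0 := by nlinarith [sq_nonneg (α - δ)]
  have had : 0 < α * δ := by nlinarith [sq_nonneg (β + γ)]
  have hxy : x = 0 ∧ y = 0 := by
    by_cases hz : z = 0
    · subst hz
      have hq : α * x ^ 2 + (β + γ) * x * y + δ * y ^ 2 = 0 := by linarith [e3]
      have hpos : 0 < 4 * α * δ - (β + γ) ^ 2 := by linarith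
      have hid : (2 * α * x + (β + γ) * y) ^ 2 + (4 * α * δ - (β + γ) ^ 2) * y ^ 2 = 0 := by
        linear_combination 4 * α * hq
      have hy2 : y ^ 2 ≤ 0 := by nlinarith [sq_nonneg (2 * α * x + (β + γ) * y)]
      have hy : y = 0 := by
        have : y ^ 2 = 0 := le_antisymm hy2 (sq_nonneg y)
        exact pow_eq_zero_iff two_ne_zero |>.mp this
      have hα : α ≠ 0 := by intro h; rw [h] at had; simp at had
      have hx : x = 0 := by
        have hx2 : α * x ^ 2 = 0 := by rw [hy] at hq; linarith [hq]
        have : x ^ 2 = 0 := by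
          rcases mul_eq_zero.mp hx2 with h | h
          · exact absurd h hα
          · exact h
        exact pow_eq_zero_iff two_ne_zero |>.mp this
      exact ⟨hx, hy⟩
    · have key0 : z * (β * y ^ 2 + (α - δ) * x * y - γ * x ^ 2) = 0 := by
        linear_combination x * e2 - y * e1
      have key : β * y ^ 2 + (α - δ) * x * y - γ * x ^ 2 = 0 :=
        (mul_eq_zero.mp key0).resolve_left hz
      have hneg : 0 < -((α - δ) ^ 2 + 4 * β * γ) := by linarith
      have hid : (2 * β * y + (α - δ) * x) ^ 2 - ((α - δ) ^ 2 + 4 * β * γ) * x ^ 2 = 0 := by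
        linear_combination 4 * β * key
      have hx2 : x ^ 2 ≤ 0 := by nlinarith [sq_nonneg (2 * β * y + (α - δ) * x)]
      have hx : x = 0 := by
        have : x ^ 2 = 0 := le_antisymm hx2 (sq_nonneg x)
        exact pow_eq_zero_iff two_ne_zero |>.mp this
      have hb : β ≠ 0 := by intro h; rw [h] at hbg; simp at hbg
      have hy : y = 0 := by
        have hy2 : β * y ^ 2 = 0 := by rw [hx] at key; linarith [key]
        have : y ^ 2 = 0 := by
          rcases mul_eq_zero.mp hy2 with h | h
          · exact absurd h hb
          · exact h
        exact pow_eq_zero_iff two_ne_zero |>.mp this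
      exact ⟨hx, hy⟩
  obtain ⟨hx, hy⟩ := hxy
  subst hx; subst hy
  refine ⟨⟨z, rfl⟩, fun hne => ?_⟩
  have hz : z ≠ 0 := by intro h; exact hne (by simp [h])
  simp only [lor]
  nlinarith [mul_self_pos.mpr hz]
end

section
/- In the Lie algebra 𝔤₇ with α = 0 ≠ γ and δ ≠ 0, a null geodesic vector with k ≠ 0 and x₁ ≠ 0 must satisfy x₁ = ((β+γ)/δ)x₂ − ((β−γ)/δ)x₃, where [(β+γ)² + δ²]x₂² − 2(β²−γ²)x₂x₃ + [(β−γ)² − δ²]x₃² = 0; and this quadratic equation admits a nonzero real solution (x₂,x₃) if and only if 4βγ + δ² ≥ 0. -/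
/-- The bracket of the Lie algebra 𝔤₇:
[e₁,e₂]=−α e₁−β e₂−β e₃, [e₁,e₃]=α e₁+β e₂+β e₃, [e₂,e₃]=γ e₁+δ e₂+δ e₃. -/
def br7 (α β γ δ : ℝ) (x y : ℝ × ℝ × ℝ) : ℝ × ℝ × ℝ :=
  (-α * (x.1 * y.2.1 - x.2.1 * y.1) + α * (x.1 * y.2.2 - x.2.2 * y.1)
     + γ * (x.2.1 * y.2.2 - x.2.2 * y.2.1),
   -β * (x.1 * y.2.1 - x.2.1 * y.1) + β * (x.1 * y.2.2 - x.2.2 * y.1)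
     + δ * (x.2.1 * y.2.2 - x.2.2 * y.2.1),
   -β * (x.1 * y.2.1 - x.2.1 * y.1) + β * (x.1 * y.2.2 - x.2.2 * y.1)
     + δ * (x.2.1 * y.2.2 - x.2.2 * y.2.1))

theorem g7_null_geodesics_case_A (β γ δ : ℝ) (hγ : γ ≠ 0) (hδ : δ ≠ 0) :
    (∀ x₁ x₂ x₃ k : ℝ, k ≠ 0 → x₁ ≠ 0 → x₁ ^ 2 + x₂ ^ 2 = x₃ ^ 2 →
      (∀ Y : ℝ × ℝ × ℝ,
        lor (br7 0 β γ δ (x₁, x₂, x₃) Y) (x₁, x₂, x₃) = k * lor (x₁, x₂, x₃) Y) →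
      x₁ = (β + γ) / δ * x₂ - (β - γ) / δ * x₃ ∧
        ((β + γ) ^ 2 + δ ^ 2) * x₂ ^ 2 - 2 * (β ^ 2 - γ ^ 2) * x₂ * x₃
          + ((β - γ) ^ 2 - δ ^ 2) * x₃ ^ 2 = 0) ∧
    ((∃ x₂ x₃ : ℝ, (x₂, x₃) ≠ (0, 0) ∧
        ((β + γ) ^ 2 + δ ^ 2) * x₂ ^ 2 - 2 * (β ^ 2 - γ ^ 2) * x₂ * x₃
          + ((β - γ) ^ 2 - δ ^ 2) * x₃ ^ 2 = 0)
      ↔ 4 * β * γ + δ ^ 2 ≥ 0) := by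
  constructor
  · intro x₁ x₂ x₃ k hk hx1 hnull h
    have h1 := h (1, 0, 0)
    have h2 := h (0, 1, 0)
    have h3 := h (0, 0, 1)
    simp only [lor, br7] at h1 h2 h3
    ring_nf at h1 h2 h3
    have hd : x₂ - x₃ ≠ 0 := by
      intro hcontra
      have hx23 : x₂ = x₃ := by linarith
      apply hx1
      have hz : k * x₁ = 0 := by
        subst hx23; linear_combination -h1
      exact (mul_eq_zero.mp hz).resolve_left hk
    have h4 : γ * x₁ * (x₂ - x₃) + δ * (x₂ - x₃) ^ 2 = k * (x₂ - x₃) := by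
      linear_combination h2 + h3
    have hkx : β * (x₂ - x₃) ^ 2 = k * x₁ := by linear_combination h1
    have hcu : (x₂ - x₃) ^ 3 ≠ 0 := pow_ne_zero 3 hd
    have key : δ * x₁ = (β + γ) * x₂ - (β - γ) * x₃ := by
      apply mul_left_cancel₀ hcu
      linear_combination x₁ * (x₂ - x₃) * h4 - (x₂ - x₃) ^ 2 * hkx
        - γ * (x₂ - x₃) ^ 2 * hnull
    refine ⟨?_, ?_⟩
    · field_simp
      linarith [key]
    · linear_combination (-(δ * x₁ + ((β + γ) * x₂ - (β - γ) * x₃))) * key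
        + δ ^ 2 * hnull
  · constructor
    · rintro ⟨x₂, x₃, hne, heq⟩
      by_contra hlt
      push_neg at hlt
      have ha : (0:ℝ) < (β + γ) ^ 2 + δ ^ 2 := by positivity
      have hx3 : x₃ ≠ 0 := by
        intro h0
        subst h0
        have hx2sq : ((β + γ) ^ 2 + δ ^ 2) * x₂ ^ 2 = 0 := by linarith [heq]
        have hx2 : x₂ = 0 := by
          have := (mul_eq_zero.mp hx2sq).resolve_left (ne_of_gt ha)
          exact pow_eq_zero_iff (n := 2) (by norm_num) |>.mp this
        exact hne (by simp [hx2])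
      have hkey : (((β + γ) ^ 2 + δ ^ 2) * x₂ - (β ^ 2 - γ ^ 2) * x₃) ^ 2
          = δ ^ 2 * (4 * β * γ + δ ^ 2) * x₃ ^ 2 := by
        linear_combination ((β + γ) ^ 2 + δ ^ 2) * heq
      have hδ2 : (0:ℝ) < δ ^ 2 := by positivity
      have hneg : δ ^ 2 * (4 * β * γ + δ ^ 2) < 0 := mul_neg_of_pos_of_neg hδ2 hlt
      have hx3sq : (0:ℝ) < x₃ ^ 2 := by positivity
      nlinarith [hkey, sq_nonneg (((β + γ) ^ 2 + δ ^ 2) * x₂ - (β ^ 2 - γ ^ 2) * x₃),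
        mul_neg_of_neg_of_pos hneg hx3sq]
    · intro hge
      have ha : (0:ℝ) < (β + γ) ^ 2 + δ ^ 2 := by positivity
      have hs : Real.sqrt (δ ^ 2 * (4 * β * γ + δ ^ 2)) ^ 2
          = δ ^ 2 * (4 * β * γ + δ ^ 2) := by
        rw [Real.sq_sqrt]; positivity
      refine ⟨β ^ 2 - γ ^ 2 + Real.sqrt (δ ^ 2 * (4 * β * γ + δ ^ 2)),
        (β + γ) ^ 2 + δ ^ 2, ?_, ?_⟩
      · simp only [ne_eq, Prod.mk.injEq, not_and]
        intro _
        exact ne_of_gt ha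
      · linear_combination ((β + γ) ^ 2 + δ ^ 2) * hs
end
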